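/- For each j ≥ 1, the polynomial 1 − 4x + 2^{j+2} x^{j+2} has a root ρ_j in the open interval (1/4, 2/5), and this is its smallest positive root. -/

import Mathlib

/-- For each `j ≥ 1`, the polynomial `1 − 4x + 2^{j+2} x^{j+2}` has a root
`ρ_j ∈ (1/4, 2/5)`, and this root is its smallest positive root. -/
theorem smallest_positive_root (j : ℕ) (hj : 1 ≤ j) :
    ∃ ρ : ℝ, ρ ∈ Set.Ioo (1/4 : ℝ) (2/5 : ℝ) ∧
      1 - 4 * ρ + 2 ^ (j + 2) * ρ ^ (j + 2) = 0 ∧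
      ∀ x : ℝ, 0 < x → 1 - 4 * x + 2 ^ (j + 2) * x ^ (j + 2) = 0 → ρ ≤ x := by
  set f : ℝ → ℝ := fun x => 1 - 4 * x + 2 ^ (j + 2) * x ^ (j + 2) with hf
  have hcont : Continuous f := by fun_prop
  have hfa : 0 < f (1/4) := by
    have h : f (1/4) = (1/2 : ℝ) ^ (j + 2) := by
      simp only [hf]
      rw [← mul_pow]
      norm_num
    rw [h]; positivity
  have hfb : f (2/5) < 0 := by
    have h : f (2/5) = (4/5 : ℝ) ^ (j + 2) - 3/5 := by
      simp only [hf]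
      rw [← mul_pow]
      norm_num
      ring
    have h2 : (4/5 : ℝ) ^ (j + 2) ≤ (4/5 : ℝ) ^ 3 := by
      apply pow_le_pow_of_le_one (by norm_num) (by norm_num) (by omega)
    rw [h]
    nlinarith
  have hpos : ∀ x : ℝ, 0 < x → x ≤ 1/4 → 0 < f x := by
    intro x hx hx4
    simp only [hf]
    have h2 : (0:ℝ) < 2 ^ (j + 2) * x ^ (j + 2) := by positivity
    nlinarith
  have hsub : Set.Ioo (f (2/5)) (f (1/4)) ⊆ f '' Set.Ioo (1/4) (2/5) :=
    intermediate_value_Ioo' (by norm_num) hcont.continuousOn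
  obtain ⟨x₀, hx₀mem, hx₀⟩ := hsub ⟨hfb, hfa⟩
  set S : Set ℝ := Set.Ici (1/4 : ℝ) ∩ f ⁻¹' {0} with hS
  have hSclosed : IsClosed S := isClosed_Ici.inter (isClosed_singleton.preimage hcont)
  have hSne : S.Nonempty := ⟨x₀, le_of_lt hx₀mem.1, hx₀⟩
  have hbdd : BddBelow S := ⟨1/4, fun x hx => hx.1⟩
  have hρS : sInf S ∈ S := hSclosed.csInf_mem hSne hbdd
  have hρ0 : f (sInf S) = 0 := hρS.2
  have hρle : sInf S ≤ x₀ := csInf_le hbdd ⟨le_of_lt hx₀mem.1, hx₀⟩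
  have hρgt : 1/4 < sInf S := by
    rcases lt_or_eq_of_le (Set.mem_Ici.mp hρS.1) with h | h
    · exact h
    · exfalso; rw [← h] at hρ0; rw [hρ0] at hfa; exact lt_irrefl 0 hfa
  refine ⟨sInf S, ⟨hρgt, lt_of_le_of_lt hρle hx₀mem.2⟩, hρ0, ?_⟩
  intro x hx hfx
  have hxS : x ∈ S := by
    constructor
    · by_contra h
      have := hpos x hx (le_of_not_ge (mt Set.mem_Ici.mpr h))
      simp only [hf] at this
      linarith
    · exact hfx
  exact csInf_le hbdd hxS
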